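/- Let P: ℝ³ → ℝ^{3×3} be a differentiable tensor field and Q ∈ SO(3) constant. Define P♯(ξ) := Q P(Q^T ξ) Q^T. Then Curl_ξ P♯(ξ) = Q · (Curl_x P)(Q^T ξ) · Q^T. -/
import Mathlib


open Matrix

noncomputable section

def eps (i j k : Fin 3) : ℝ :=
  if (i = 0 ∧ j = 1 ∧ k = 2) ∨ (i = 1 ∧ j = 2 ∧ k = 0) ∨ (i = 2 ∧ j = 0 ∧ k = 1) then 1
  else if (i = 2 ∧ j = 1 ∧ k = 0) ∨ (i = 1 ∧ j = 0 ∧ k = 2) ∨ (i = 0 ∧ j = 2 ∧ k = 1) then -1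
  else 0

def tCurl (X : (Fin 3 → ℝ) → Matrix (Fin 3) (Fin 3) ℝ) (x : Fin 3 → ℝ) :
    Matrix (Fin 3) (Fin 3) ℝ :=
  Matrix.of fun i j => -∑ a, ∑ b, fderiv ℝ (fun y => X y i a) x (Pi.single b 1) * eps a b j

lemma epsdet (Q : Matrix (Fin 3) (Fin 3) ℝ) (l c m : Fin 3) :
    ∑ a, ∑ b, ∑ j, eps a b j * Q a l * Q b c * Q j m = Q.det * eps l c m := by
  fin_cases l <;> fin_cases c <;> fin_cases m <;>
    simp [eps, Fin.sum_univ_three, Matrix.det_fin_three] <;> ring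

lemma key (Q : Matrix (Fin 3) (Fin 3) ℝ) (hQ : Qᵀ * Q = 1) (hdet : Q.det = 1)
    (l c j : Fin 3) :
    ∑ a, ∑ b, Q a l * Q b c * eps a b j = ∑ m, Q j m * eps l c m := by
  have hQ' : Q * Qᵀ = 1 := mul_eq_one_comm.mp hQ
  have h1 : ∀ m, ∑ a, ∑ b, ∑ j', eps a b j' * Q a l * Q b c * Q j' m = eps l c m := by
    intro m; rw [epsdet, hdet, one_mul]
  have h2 : ∑ m, Q j m * ∑ a, ∑ b, ∑ j', eps a b j' * Q a l * Q b c * Q j' m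
      = ∑ a, ∑ b, ∑ j', eps a b j' * Q a l * Q b c * ((Q * Qᵀ) j j') := by
    simp only [Matrix.mul_apply, Matrix.transpose_apply, Finset.mul_sum]
    rw [Finset.sum_comm]
    refine Finset.sum_congr rfl fun a _ => ?_
    rw [Finset.sum_comm]
    refine Finset.sum_congr rfl fun b _ => ?_
    rw [Finset.sum_comm]
    refine Finset.sum_congr rfl fun j' _ => Finset.sum_congr rfl fun m _ => by ring
  have h3 : ∑ a, ∑ b, ∑ j', eps a b j' * Q a l * Q b c * ((Q * Qᵀ) j j')
      = ∑ a, ∑ b, Q a l * Q b c * eps a b j := by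
    simp only [hQ', Matrix.one_apply]
    refine Finset.sum_congr rfl fun a _ => Finset.sum_congr rfl fun b _ => ?_
    rw [Finset.sum_eq_single j]
    · simp; ring
    · intro j' _ hj'; simp [Ne.symm hj']
    · simp
  calc ∑ a, ∑ b, Q a l * Q b c * eps a b j
      = ∑ m, Q j m * ∑ a, ∑ b, ∑ j', eps a b j' * Q a l * Q b c * Q j' m := by
        rw [h2, h3]
    _ = ∑ m, Q j m * eps l c m := by simp_rw [h1]

lemma clm_single (f : (Fin 3 → ℝ) →L[ℝ] ℝ) (v : Fin 3 → ℝ) :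
    f v = ∑ c, v c * f (Pi.single c 1) := by
  have hv : v = ∑ c, v c • (Pi.single c 1 : Fin 3 → ℝ) := by
    ext d; simp [Pi.single_apply]
  conv_lhs => rw [hv]
  rw [map_sum]
  simp [smul_eq_mul]

lemma fderiv_sharp (P : (Fin 3 → ℝ) → Matrix (Fin 3) (Fin 3) ℝ)
    (hP : ∀ i j, Differentiable ℝ (fun y => P y i j))
    (Q : Matrix (Fin 3) (Fin 3) ℝ) (ξ : Fin 3 → ℝ) (i a b : Fin 3) :
    fderiv ℝ (fun η => (Q * P (Qᵀ.mulVec η) * Qᵀ) i a) ξ (Pi.single b 1)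
    = ∑ k, ∑ l, Q i k * Q a l *
        ∑ c, Q b c * fderiv ℝ (fun y => P y k l) (Qᵀ.mulVec ξ) (Pi.single c 1) := by
  set L : (Fin 3 → ℝ) →L[ℝ] (Fin 3 → ℝ) :=
    LinearMap.toContinuousLinearMap (Matrix.mulVecLin Qᵀ) with hL
  have hLapp : ∀ v, L v = Qᵀ.mulVec v := fun v => rfl
  have hg : ∀ k l, DifferentiableAt ℝ (fun η => P (Qᵀ.mulVec η) k l) ξ := by
    intro k l
    exact ((hP k l).differentiableAt).comp ξ L.differentiableAt
  have hgd : ∀ k l, fderiv ℝ (fun η => P (Qᵀ.mulVec η) k l) ξ (Pi.single b 1)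
      = ∑ c, Q b c * fderiv ℝ (fun y => P y k l) (Qᵀ.mulVec ξ) (Pi.single c 1) := by
    intro k l
    rw [show (fun η => P (Qᵀ.mulVec η) k l) = (fun y => P y k l) ∘ L from rfl,
      fderiv_comp ξ ((hP k l).differentiableAt) L.differentiableAt,
      ContinuousLinearMap.fderiv]
    rw [ContinuousLinearMap.comp_apply]
    have h1 : L (Pi.single b 1) = fun c => Q b c := by
      funext c; simp [hLapp, Matrix.mulVec_single]
    rw [h1, hLapp, clm_single]
  have hrow : (fun η => (Q * P (Qᵀ.mulVec η) * Qᵀ) i a)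
      = fun η => ∑ l, (∑ k, Q i k * P (Qᵀ.mulVec η) k l) * Q a l := by
    funext η
    simp [Matrix.mul_apply, Matrix.transpose_apply, Finset.sum_mul]
  rw [hrow, fderiv_fun_sum (fun l _ => by
    exact (DifferentiableAt.fun_sum fun k _ => (hg k l).const_mul _).mul_const _)]
  rw [ContinuousLinearMap.sum_apply, ← Finset.sum_comm]
  refine Finset.sum_congr rfl fun l _ => ?_
  rw [fderiv_mul_const (DifferentiableAt.fun_sum fun k _ => (hg k l).const_mul _)]
  rw [ContinuousLinearMap.smul_apply,
    fderiv_fun_sum (fun k _ => (hg k l).const_mul _), ContinuousLinearMap.sum_apply,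
    smul_eq_mul, Finset.mul_sum]
  refine Finset.sum_congr rfl fun k _ => ?_
  rw [fderiv_const_mul (hg k l), ContinuousLinearMap.smul_apply, smul_eq_mul, hgd k l]
  ring

lemma sumjug (Q : Matrix (Fin 3) (Fin 3) ℝ) (hQ : Qᵀ * Q = 1) (hdet : Q.det = 1)
    (D : Fin 3 → Fin 3 → Fin 3 → ℝ) (i j : Fin 3) :
    -∑ a, ∑ b, (∑ k, ∑ l, Q i k * Q a l * ∑ c, Q b c * D k l c) * eps a b j
    = ∑ m, (∑ k, Q i k * (-∑ l, ∑ c, D k l c * eps l c m)) * Q j m := by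
  have h : ∀ l c, ∑ a, ∑ b, Q a l * Q b c * eps a b j = ∑ m, Q j m * eps l c m :=
    fun l c => key Q hQ hdet l c j
  simp only [Fin.sum_univ_three] at h ⊢
  linear_combination
    (-(Q i 0 * D 0 0 0 + Q i 1 * D 1 0 0 + Q i 2 * D 2 0 0)) * h 0 0 +
    (-(Q i 0 * D 0 0 1 + Q i 1 * D 1 0 1 + Q i 2 * D 2 0 1)) * h 0 1 +
    (-(Q i 0 * D 0 0 2 + Q i 1 * D 1 0 2 + Q i 2 * D 2 0 2)) * h 0 2 +
    (-(Q i 0 * D 0 1 0 + Q i 1 * D 1 1 0 + Q i 2 * D 2 1 0)) * h 1 0 +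
    (-(Q i 0 * D 0 1 1 + Q i 1 * D 1 1 1 + Q i 2 * D 2 1 1)) * h 1 1 +
    (-(Q i 0 * D 0 1 2 + Q i 1 * D 1 1 2 + Q i 2 * D 2 1 2)) * h 1 2 +
    (-(Q i 0 * D 0 2 0 + Q i 1 * D 1 2 0 + Q i 2 * D 2 2 0)) * h 2 0 +
    (-(Q i 0 * D 0 2 1 + Q i 1 * D 1 2 1 + Q i 2 * D 2 2 1)) * h 2 1 +
    (-(Q i 0 * D 0 2 2 + Q i 1 * D 1 2 2 + Q i 2 * D 2 2 2)) * h 2 2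

theorem tCurl_sharp_transform (P : (Fin 3 → ℝ) → Matrix (Fin 3) (Fin 3) ℝ)
    (hP : ∀ i j, Differentiable ℝ (fun y => P y i j))
    (Q : Matrix (Fin 3) (Fin 3) ℝ) (hQ : Qᵀ * Q = 1) (hdet : Q.det = 1) (ξ : Fin 3 → ℝ) :
    tCurl (fun η => Q * P (Qᵀ.mulVec η) * Qᵀ) ξ = Q * tCurl P (Qᵀ.mulVec ξ) * Qᵀ := by
  ext i j
  simp only [tCurl, Matrix.of_apply]
  simp_rw [fderiv_sharp P hP Q ξ i]
  simp only [Matrix.mul_apply, Matrix.of_apply, Matrix.transpose_apply]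
  exact sumjug Q hQ hdet
    (fun k l c => fderiv ℝ (fun y => P y k l) (Qᵀ.mulVec ξ) (Pi.single c 1)) i j
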